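/- Let g_t be a flow on a compact metric space M such that d(g_t x, g_t y) ≤ C₀ e^{−Bt} d(x,y) for y in the stable set of x, and let τ be Lipschitz and positive, bounded below by τ_min > 0 and above by τ_max. Then there exist constants c, C > 0 such that for all t > 0, |α(x,t) − α(y, t − β^s(x,y))| ≤ C e^{−ct}, where α is the inverse time-change cocycle and β^s is as above. -/

import Mathlib

open MeasureTheory

section StmtAux
open Set


private lemma exp_Ioi_int {B : ℝ} (hB : 0 < B) (b : ℝ) :
    ∫ r in Set.Ioi b, Real.exp (-B * r) = Real.exp (-B * b) / B := by
  have hderiv : ∀ u ∈ Set.Ici b, HasDerivAt (fun u => -Real.exp (-B * u) / B)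
      (Real.exp (-B * u)) u := by
    intro u _
    have h1 : HasDerivAt (fun u : ℝ => -B * u) (-B) u := by
      simpa using (hasDerivAt_id u).const_mul (-B)
    have h2 := (h1.exp).neg.div_const B
    refine h2.congr_deriv ?_
    field_simp
  have htend : Filter.Tendsto (fun u => -Real.exp (-B * u) / B) Filter.atTop
      (nhds (-0 / B)) := by
    apply Filter.Tendsto.div_const
    apply Filter.Tendsto.neg
    exact Real.tendsto_exp_atBot.comp (Filter.tendsto_id.const_mul_atTop_of_neg (by linarith))
  have := integral_Ioi_of_hasDerivAt_of_tendsto' hderiv (exp_neg_integrableOn_Ioi b hB) htend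
  rw [this]; field_simp; simp

private lemma aux_lb' {f : ℝ → ℝ} (hf : Continuous f) {m : ℝ}
    (hfm : ∀ r, m ≤ f r) {u v : ℝ} (h : v ≤ u) :
    m * (u - v) ≤ ∫ r in v..u, f r := by
  have h1 : (∫ _ in v..u, m) ≤ ∫ r in v..u, f r :=
    intervalIntegral.integral_mono_on h intervalIntegrable_const
      (hf.intervalIntegrable _ _) (fun r _ => hfm r)
  simpa [smul_eq_mul, mul_comm] using h1

private lemma aux_lb {f : ℝ → ℝ} (hf : Continuous f) {m : ℝ} (hm : 0 ≤ m)
    (hfm : ∀ r, m ≤ f r) (u v : ℝ) : m * |u - v| ≤ |∫ r in v..u, f r| := by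
  rcases le_total v u with h | h
  · have h1 := aux_lb' hf hfm h
    have h2 : 0 ≤ ∫ r in v..u, f r := le_trans (by nlinarith) h1
    rw [abs_of_nonneg h2, abs_of_nonneg (sub_nonneg.mpr h)]
    exact h1
  · have h1 := aux_lb' hf hfm h
    rw [intervalIntegral.integral_symm, abs_neg, abs_sub_comm]
    have h2 : 0 ≤ ∫ r in u..v, f r := le_trans (by nlinarith) h1
    rw [abs_of_nonneg h2, abs_of_nonneg (sub_nonneg.mpr h)]
    exact h1


private lemma key_est {f h : ℝ → ℝ} (hfc : Continuous f) (hhc : Continuous h)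
    {τmin τmax A B : ℝ} (hτmin : 0 < τmin) (hτmm : τmin ≤ τmax)
    (hfbd : ∀ r, τmin ≤ f r ∧ f r ≤ τmax) (hhbd : ∀ r, τmin ≤ h r ∧ h r ≤ τmax)
    (hA : 0 < A) (hB : 0 < B)
    (hdiff : ∀ r, 0 ≤ r → |f r - h r| ≤ A * Real.exp (-B * r))
    {a b t : ℝ} (ht : 0 < t)
    (ha : (∫ r in (0:ℝ)..a, f r) = t)
    (hb : (∫ r in (0:ℝ)..b, h r) = t - ∫ r in Set.Ioi (0:ℝ), (f r - h r)) :
    |a - b| ≤ ((A/B)/τmin + (A/B + 2*(A/B)*τmax/τmin)/τmin) * Real.exp ((B/τmax)*(A/B))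
      * Real.exp (-(B/τmax) * t) := by
  have hτmax0 : 0 < τmax := lt_of_lt_of_le hτmin hτmm
  set K : ℝ := A / B with hKdef
  have hK0 : 0 < K := by positivity
  set c : ℝ := B / τmax with hcdef
  have hc0 : 0 < c := by positivity
  set β : ℝ := ∫ r in Set.Ioi (0:ℝ), (f r - h r) with hβdef
  -- integrability of the difference on tails
  have hexpA : ∀ u : ℝ, IntegrableOn (fun r => A * Real.exp (-B * r)) (Set.Ioi u) :=
    fun u => (exp_neg_integrableOn_Ioi u hB).const_mul A
  have hdiffc : Continuous (fun r => f r - h r) := hfc.sub hhc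
  have hintdiff : ∀ u : ℝ, 0 ≤ u → IntegrableOn (fun r => f r - h r) (Set.Ioi u) := by
    intro u hu
    refine Integrable.mono (hexpA u) hdiffc.aestronglyMeasurable.restrict ?_
    filter_upwards [ae_restrict_mem measurableSet_Ioi] with r hr
    have hr0 : (0:ℝ) ≤ r := le_trans hu (le_of_lt hr)
    rw [Real.norm_eq_abs, Real.norm_eq_abs]
    exact le_trans (hdiff r hr0) (le_abs_self _)
  have hIoival : ∀ u : ℝ, ∫ r in Set.Ioi u, A * Real.exp (-B * r) = K * Real.exp (-B * u) := by
    intro u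
    rw [MeasureTheory.integral_const_mul, exp_Ioi_int hB u, hKdef]
    ring
  have hIoibd : ∀ u : ℝ, 0 ≤ u → |∫ r in Set.Ioi u, (f r - h r)| ≤ K * Real.exp (-B * u) := by
    intro u hu
    have hbd : ∀ᵐ r ∂(volume.restrict (Set.Ioi u)), ‖f r - h r‖ ≤ A * Real.exp (-B * r) := by
      filter_upwards [ae_restrict_mem measurableSet_Ioi] with r hr
      rw [Real.norm_eq_abs]
      exact hdiff r (le_trans hu (le_of_lt hr))
    have := norm_integral_le_of_norm_le (hexpA u) hbd
    rw [Real.norm_eq_abs, hIoival u] at this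
    exact this
  have hβbd : |β| ≤ K := by
    have := hIoibd 0 le_rfl
    simpa using this
  -- interval integrability
  have hfint : ∀ u v : ℝ, IntervalIntegrable f volume u v := fun u v => hfc.intervalIntegrable u v
  have hhint : ∀ u v : ℝ, IntervalIntegrable h volume u v := fun u v => hhc.intervalIntegrable u v
  have hdint : ∀ u v : ℝ, IntervalIntegrable (fun r => f r - h r) volume u v :=
    fun u v => hdiffc.intervalIntegrable u v
  -- key identity
  have hsplit : (∫ r in b..a, f r) = β - ∫ r in (0:ℝ)..b, (f r - h r) := by
    have h1 : (∫ r in (0:ℝ)..b, f r) + (∫ r in b..a, f r) = ∫ r in (0:ℝ)..a, f r :=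
      intervalIntegral.integral_add_adjacent_intervals (hfint 0 b) (hfint b a)
    have h2 : (∫ r in (0:ℝ)..b, (f r - h r))
        = (∫ r in (0:ℝ)..b, f r) - ∫ r in (0:ℝ)..b, h r :=
      intervalIntegral.integral_sub (hfint 0 b) (hhint 0 b)
    rw [ha] at h1
    rw [hb] at h2
    linarith
  have hmain : τmin * |a - b| ≤ |∫ r in b..a, f r| :=
    aux_lb hfc hτmin.le (fun r => (hfbd r).1) a b
  have habsK := abs_le.mp hβbd
  rcases le_or_gt K t with hcase | hcase
  · -- large t : b ≥ 0
    have hb0 : 0 ≤ b := by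
      by_contra hbneg
      push_neg at hbneg
      have h4 : τmin * (0 - b) ≤ ∫ r in b..(0:ℝ), h r :=
        aux_lb' hhc (fun r => (hhbd r).1) hbneg.le
      have h3 : (∫ r in (0:ℝ)..b, h r) = -(∫ r in b..(0:ℝ), h r) :=
        (intervalIntegral.integral_symm b 0)
      rw [h3] at hb
      nlinarith
    have hbub : t - β ≤ τmax * b := by
      rw [← hb]
      have h1 : (∫ r in (0:ℝ)..b, h r) ≤ ∫ _ in (0:ℝ)..b, τmax :=
        intervalIntegral.integral_mono_on hb0 (hhint 0 b) intervalIntegrable_const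
          (fun r _ => (hhbd r).2)
      simpa [smul_eq_mul, mul_comm] using h1
    have hblb : c * (t - K) ≤ B * b := by
      rw [hcdef]
      rw [div_mul_eq_mul_div, div_le_iff₀ hτmax0]
      have h1 : t - K ≤ τmax * b := by linarith [habsK.2]
      nlinarith
    have hsplit2 : β - (∫ r in (0:ℝ)..b, (f r - h r)) = ∫ r in Set.Ioi b, (f r - h r) := by
      have hunion : Set.Ioc 0 b ∪ Set.Ioi b = Set.Ioi (0:ℝ) := Set.Ioc_union_Ioi_eq_Ioi hb0
      have hdisj : Disjoint (Set.Ioc (0:ℝ) b) (Set.Ioi b) := Set.Ioc_disjoint_Ioi le_rfl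
      have hIoc : IntegrableOn (fun r => f r - h r) (Set.Ioc (0:ℝ) b) :=
        hdiffc.integrableOn_Ioc
      have := MeasureTheory.setIntegral_union hdisj measurableSet_Ioi hIoc (hintdiff b hb0)
        (f := fun r => f r - h r) (μ := volume)
      rw [hunion] at this
      rw [hβdef, this, intervalIntegral.integral_of_le hb0]
      ring
    have htail : |∫ r in b..a, f r| ≤ K * Real.exp (-B * b) := by
      rw [hsplit, hsplit2]
      exact hIoibd b hb0
    have h5 : τmin * |a - b| ≤ K * Real.exp (-B * b) := le_trans hmain htail
    have h6 : Real.exp (-B * b) ≤ Real.exp (c*K) * Real.exp (-c*t) := by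
      rw [← Real.exp_add]
      apply Real.exp_le_exp.mpr
      nlinarith
    have h7 : |a - b| ≤ (K/τmin) * (Real.exp (c*K) * Real.exp (-c*t)) := by
      rw [div_mul_eq_mul_div, le_div_iff₀ hτmin]
      nlinarith [Real.exp_pos (-B*b), Real.exp_pos (-c*t), Real.exp_pos (c*K)]
    calc |a - b| ≤ (K/τmin) * (Real.exp (c*K) * Real.exp (-c*t)) := h7
      _ ≤ (K/τmin + (K + 2*K*τmax/τmin)/τmin) * Real.exp (c*K) * Real.exp (-c*t) := by
          have h8 : 0 ≤ (K + 2*K*τmax/τmin)/τmin := by positivity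
          nlinarith [Real.exp_pos (c*K), Real.exp_pos (-c*t),
            mul_pos (Real.exp_pos (c*K)) (Real.exp_pos (-c*t))]
      _ = (K/τmin + (K + 2*K*τmax/τmin)/τmin) * Real.exp (c*K) * Real.exp (-c*t) := rfl
  · -- small t : crude bound
    have hbabs : τmin * |b| ≤ |t - β| := by
      have h1 := aux_lb hhc hτmin.le (fun r => (hhbd r).1) b 0
      rw [hb, sub_zero] at h1
      exact h1
    have htβ : |t - β| ≤ 2*K := by
      rw [abs_le]; constructor <;> [linarith [habsK.2]; linarith [habsK.1]]
    have hbabs2 : |b| ≤ 2*K/τmin := by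
      rw [le_div_iff₀ hτmin]
      nlinarith
    have hintbd : |∫ r in (0:ℝ)..b, (f r - h r)| ≤ τmax * |b| := by
      have h1 : ∀ r ∈ Set.uIoc (0:ℝ) b, ‖f r - h r‖ ≤ τmax := by
        intro r _
        rw [Real.norm_eq_abs, abs_le]
        constructor
        · linarith [(hfbd r).1, (hhbd r).2]
        · linarith [(hfbd r).2, (hhbd r).1]
      have := intervalIntegral.norm_integral_le_of_norm_le_const h1
      rw [Real.norm_eq_abs] at this
      simpa [abs_sub_comm] using this
    have h5 : τmin * |a - b| ≤ K + τmax * (2*K/τmin) := by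
      calc τmin * |a - b| ≤ |∫ r in b..a, f r| := hmain
        _ = |β - ∫ r in (0:ℝ)..b, (f r - h r)| := by rw [hsplit]
        _ ≤ |β| + |∫ r in (0:ℝ)..b, (f r - h r)| := abs_sub _ _
        _ ≤ K + τmax * |b| := by gcongr
        _ ≤ K + τmax * (2*K/τmin) := by gcongr
    have h6 : |a - b| ≤ (K + 2*K*τmax/τmin)/τmin := by
      rw [le_div_iff₀ hτmin]
      calc |a - b| * τmin = τmin * |a - b| := by ring
        _ ≤ K + τmax * (2*K/τmin) := h5
        _ = K + 2*K*τmax/τmin := by ring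
    have h7 : (1:ℝ) ≤ Real.exp (c*K) * Real.exp (-c*t) := by
      rw [← Real.exp_add]
      apply Real.one_le_exp
      have hck := mul_nonneg hc0.le (show (0:ℝ) ≤ K - t by linarith)
      linarith only [hck]
    have h8 : 0 ≤ (K + 2*K*τmax/τmin)/τmin := by positivity
    have h9 : 0 < K/τmin := by positivity
    calc |a - b| ≤ (K + 2*K*τmax/τmin)/τmin := h6
      _ ≤ (K/τmin + (K + 2*K*τmax/τmin)/τmin) * (Real.exp (c*K) * Real.exp (-c*t)) := by
          have e1 : (0:ℝ) ≤ Real.exp (c*K) * Real.exp (-c*t) := by positivity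
          have f1 : 0 ≤ K/τmin * (Real.exp (c*K) * Real.exp (-c*t)) := mul_nonneg h9.le e1
          have f2 : (K + 2*K*τmax/τmin)/τmin
              ≤ (K + 2*K*τmax/τmin)/τmin * (Real.exp (c*K) * Real.exp (-c*t)) :=
            le_mul_of_one_le_right h8 h7
          linarith only [f1, f2]
      _ = (K/τmin + (K + 2*K*τmax/τmin)/τmin) * Real.exp (c*K) * Real.exp (-c*t) := by ring



end StmtAux

/-- Quantitative version: under exponential contraction
`d(g_t x, g_t y) ≤ C₀ e^{−Bt} d(x,y)` and `0 < τ_min ≤ τ ≤ τ_max` Lipschitz,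
there are constants `c, C > 0` with
`|α(x,t) − α(y, t − β^s(x,y))| ≤ C e^{−ct}` for all `t > 0`. -/
theorem stmt_5 {M : Type*} [MetricSpace M] [CompactSpace M]
    (g : ℝ → M → M)
    (hg : Continuous fun p : ℝ × M => g p.1 p.2)
    (τ : M → ℝ) (L : NNReal) (hτ : LipschitzWith L τ)
    (τmin τmax : ℝ) (hτmin : 0 < τmin)
    (hτbd : ∀ z, τmin ≤ τ z ∧ τ z ≤ τmax)
    (α : M → ℝ → ℝ)
    (hα : ∀ z t, (∫ r in (0:ℝ)..(α z t), τ (g r z)) = t)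
    (hα' : ∀ z t, α z (∫ r in (0:ℝ)..t, τ (g r z)) = t)
    (C₀ B : ℝ) (hC₀ : 0 < C₀) (hB : 0 < B)
    (x y : M)
    (hcontr : ∀ t ≥ (0:ℝ), dist (g t x) (g t y) ≤ C₀ * Real.exp (-B * t) * dist x y) :
    ∃ c > (0:ℝ), ∃ C > (0:ℝ), ∀ t > (0:ℝ),
      |α x t - α y (t - ∫ r in Set.Ioi (0:ℝ), (τ (g r x) - τ (g r y)))|
        ≤ C * Real.exp (-c * t) := by
  have hτmax0 : 0 < τmax := lt_of_lt_of_le hτmin ((hτbd x).1.trans (hτbd x).2)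
  have hτmm : τmin ≤ τmax := (hτbd x).1.trans (hτbd x).2
  set d : ℝ := dist x y with hd
  have hd0 : (0:ℝ) ≤ d := dist_nonneg
  set A : ℝ := ((L:ℝ) + 1) * C₀ * (d + 1) with hA
  have hL0 : (0:ℝ) ≤ (L:ℝ) := L.coe_nonneg
  have hA0 : 0 < A := by positivity
  refine ⟨B/τmax, by positivity,
    ((A/B)/τmin + (A/B + 2*(A/B)*τmax/τmin)/τmin) * Real.exp ((B/τmax)*(A/B)),
    by positivity, ?_⟩
  intro t ht
  have hfc : Continuous (fun r : ℝ => τ (g r x)) := by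
    exact hτ.continuous.comp (hg.comp (continuous_id.prodMk continuous_const))
  have hhc : Continuous (fun r : ℝ => τ (g r y)) := by
    exact hτ.continuous.comp (hg.comp (continuous_id.prodMk continuous_const))
  have hdiff : ∀ r : ℝ, 0 ≤ r → |τ (g r x) - τ (g r y)| ≤ A * Real.exp (-B * r) := by
    intro r hr
    have h1 : dist (τ (g r x)) (τ (g r y)) ≤ (L:ℝ) * dist (g r x) (g r y) :=
      hτ.dist_le_mul _ _
    rw [Real.dist_eq] at h1
    have h2 := hcontr r hr
    have hexp : 0 < Real.exp (-B * r) := Real.exp_pos _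
    have h3 : (L:ℝ) * dist (g r x) (g r y) ≤ (L:ℝ) * (C₀ * Real.exp (-B * r) * d) := by
      apply mul_le_mul_of_nonneg_left _ hL0
      exact h2
    have h4 : A * Real.exp (-B * r) - (L:ℝ) * (C₀ * Real.exp (-B * r) * d)
        = C₀ * Real.exp (-B * r) * ((L:ℝ) + d + 1) := by rw [hA]; ring
    have h5 : 0 ≤ C₀ * Real.exp (-B * r) * ((L:ℝ) + d + 1) := by positivity
    linarith
  exact key_est hfc hhc hτmin hτmm (fun r => hτbd (g r x)) (fun r => hτbd (g r y))
    hA0 hB hdiff ht (hα x t) (hα y _)
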